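/- Let Z₁, …, Z_n be i.i.d. random variables with values in [0,1], let Z be their average and ζ = E[Z]. For α > 0 define r(α, x) = α/n + sqrt(α·x/n). Then with probability at least 1 − (2^{−α} + 2·e^{−α/72}), both |Z − ζ| < r(α, Z) and r(α, Z) < 3·r(α, ζ) hold. -/

import Mathlib

open MeasureTheory ProbabilityTheory


private lemma exp_mul_le_aux (s x : ℝ) (hx0 : 0 ≤ x) (hx1 : x ≤ 1) :
    Real.exp (s * x) ≤ 1 + x * (Real.exp s - 1) := by
  have h := convexOn_exp.2 (Set.mem_univ (0:ℝ)) (Set.mem_univ s)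
      (by linarith : (0:ℝ) ≤ 1 - x) hx0 (by ring)
  simp only [smul_eq_mul, mul_zero, zero_add, Real.exp_zero] at h
  rw [mul_comm s x]
  linarith

private lemma mgf_single_le {Ω : Type*} [MeasurableSpace Ω] {P : Measure Ω} [IsProbabilityMeasure P]
    {X : Ω → ℝ} (hX : Measurable X) (hr : ∀ᵐ ω ∂P, X ω ∈ Set.Icc (0:ℝ) 1) (t : ℝ) :
    mgf X P t ≤ Real.exp ((∫ ω, X ω ∂P) * (Real.exp t - 1)) := by
  have hintX : Integrable X P := by
    refine (integrable_const 1).mono' hX.aestronglyMeasurable ?_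
    filter_upwards [hr] with ω h
    rw [Real.norm_eq_abs, abs_le]; exact ⟨by linarith [h.1], h.2⟩
  have hexp : Integrable (fun ω => Real.exp (t * X ω)) P := by
    refine (integrable_const (Real.exp |t|)).mono' ((hX.const_mul t).exp).aestronglyMeasurable ?_
    filter_upwards [hr] with ω h
    rw [Real.norm_eq_abs, abs_of_pos (Real.exp_pos _)]
    apply Real.exp_le_exp.2
    nlinarith [le_abs_self t, abs_nonneg t, h.1, h.2]
  have h1 : mgf X P t ≤ ∫ ω, (1 + X ω * (Real.exp t - 1)) ∂P := by
    refine integral_mono_ae hexp ((integrable_const 1).add (hintX.mul_const _)) ?_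
    filter_upwards [hr] with ω h
    exact exp_mul_le_aux t (X ω) h.1 h.2
  have h2 : ∫ ω, (1 + X ω * (Real.exp t - 1)) ∂P
      = 1 + (∫ ω, X ω ∂P) * (Real.exp t - 1) := by
    rw [integral_add (integrable_const 1) (hintX.mul_const _), integral_const,
      integral_mul_const]
    simp
  rw [h2] at h1
  exact h1.trans (by linarith [Real.add_one_le_exp ((∫ ω, X ω ∂P) * (Real.exp t - 1))])

private lemma mgf_sum_le' {Ω : Type*} [MeasurableSpace Ω] {P : Measure Ω} [IsProbabilityMeasure P]
    {n : ℕ} {Z : Fin n → Ω → ℝ} (hmeas : ∀ i, Measurable (Z i))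
    (hindep : iIndepFun Z P)
    (hrange : ∀ i, ∀ᵐ ω ∂P, Z i ω ∈ Set.Icc (0:ℝ) 1) (t : ℝ) :
    mgf (∑ i, Z i) P t ≤ Real.exp ((∑ i, ∫ ω, Z i ω ∂P) * (Real.exp t - 1)) := by
  rw [hindep.mgf_sum hmeas]
  calc ∏ i, mgf (Z i) P t ≤ ∏ i, Real.exp ((∫ ω, Z i ω ∂P) * (Real.exp t - 1)) :=
        Finset.prod_le_prod (fun i _ => mgf_nonneg)
          (fun i _ => mgf_single_le (hmeas i) (hrange i) t)
    _ = Real.exp (∑ i, (∫ ω, Z i ω ∂P) * (Real.exp t - 1)) := (Real.exp_sum _ _).symm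
    _ = _ := by rw [← Finset.sum_mul]


section
variable {Ω : Type*} [MeasurableSpace Ω] {P : Measure Ω} [IsProbabilityMeasure P]
    {n : ℕ} {Z : Fin n → Ω → ℝ}

private lemma exp_sum_integrable (hmeas : ∀ i, Measurable (Z i))
    (hrange : ∀ i, ∀ᵐ ω ∂P, Z i ω ∈ Set.Icc (0:ℝ) 1) (t : ℝ) :
    Integrable (fun ω => Real.exp (t * (∑ i, Z i) ω)) P := by
  have hSm : Measurable (∑ i, Z i) := by
    have := Finset.measurable_sum Finset.univ (fun (i : Fin n) _ => hmeas i)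
    convert this using 1
    funext a
    simp [Finset.sum_apply]
  refine (integrable_const (Real.exp (|t| * n))).mono'
    ((hSm.const_mul t).exp).aestronglyMeasurable ?_
  filter_upwards [ae_all_iff.2 hrange] with ω h
  rw [Real.norm_eq_abs, abs_of_pos (Real.exp_pos _)]
  apply Real.exp_le_exp.2
  have hs0 : 0 ≤ (∑ i, Z i) ω := by
    rw [Finset.sum_apply]; exact Finset.sum_nonneg (fun i _ => (h i).1)
  have hsn : (∑ i, Z i) ω ≤ n := by
    rw [Finset.sum_apply]
    calc ∑ i, Z i ω ≤ ∑ _i : Fin n, (1:ℝ) := Finset.sum_le_sum (fun i _ => (h i).2)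
      _ = n := by simp
  nlinarith [le_abs_self t, abs_nonneg t]

private lemma tail_upper' (hmeas : ∀ i, Measurable (Z i))
    (hindep : iIndepFun Z P)
    (hrange : ∀ i, ∀ᵐ ω ∂P, Z i ω ∈ Set.Icc (0:ℝ) 1) (a t : ℝ) (ht : 0 ≤ t) :
    P {ω | a ≤ ∑ i, Z i ω} ≤
      ENNReal.ofReal (Real.exp (-(t*a) + (∑ i, ∫ ω, Z i ω ∂P) * (Real.exp t - 1))) := by
  have hint := exp_sum_integrable hmeas hrange (t := t)
  have h := measure_ge_le_exp_mul_mgf (X := ∑ i, Z i) (μ := P) a ht hint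
  have hset : {ω | a ≤ (∑ i, Z i) ω} = {ω | a ≤ ∑ i, Z i ω} := by
    ext ω; simp [Finset.sum_apply]
  rw [hset] at h
  rw [ENNReal.le_ofReal_iff_toReal_le (measure_ne_top _ _) (Real.exp_pos _).le]
  calc (P {ω | a ≤ ∑ i, Z i ω}).toReal ≤ Real.exp (-t * a) * mgf (∑ i, Z i) P t := h
    _ ≤ Real.exp (-t * a) * Real.exp ((∑ i, ∫ ω, Z i ω ∂P) * (Real.exp t - 1)) := by
        exact mul_le_mul_of_nonneg_left (mgf_sum_le' hmeas hindep hrange t) (Real.exp_pos _).le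
    _ = _ := by rw [← Real.exp_add]; ring_nf

private lemma tail_lower' (hmeas : ∀ i, Measurable (Z i))
    (hindep : iIndepFun Z P)
    (hrange : ∀ i, ∀ᵐ ω ∂P, Z i ω ∈ Set.Icc (0:ℝ) 1) (a t : ℝ) (ht : 0 ≤ t) :
    P {ω | ∑ i, Z i ω ≤ a} ≤
      ENNReal.ofReal (Real.exp (t*a + (∑ i, ∫ ω, Z i ω ∂P) * (Real.exp (-t) - 1))) := by
  have hint := exp_sum_integrable hmeas hrange (t := -t)
  have h := measure_le_le_exp_mul_mgf (X := ∑ i, Z i) (μ := P) (t := -t) a (by linarith) hint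
  have hset : {ω | (∑ i, Z i) ω ≤ a} = {ω | ∑ i, Z i ω ≤ a} := by
    ext ω; simp [Finset.sum_apply]
  rw [hset] at h
  rw [ENNReal.le_ofReal_iff_toReal_le (measure_ne_top _ _) (Real.exp_pos _).le]
  calc (P {ω | ∑ i, Z i ω ≤ a}).toReal ≤ Real.exp (-(-t) * a) * mgf (∑ i, Z i) P (-t) := h
    _ ≤ Real.exp (t * a) * Real.exp ((∑ i, ∫ ω, Z i ω ∂P) * (Real.exp (-t) - 1)) := by
        rw [neg_neg]
        exact mul_le_mul_of_nonneg_left (mgf_sum_le' hmeas hindep hrange (-t)) (Real.exp_pos _).le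
    _ = _ := by rw [← Real.exp_add]

end


private lemma sqrt_div_nn {a s nr : ℝ} (hs : 0 ≤ a * s) (hn : 0 < nr) :
    Real.sqrt (a * (s / nr) / nr) = Real.sqrt (a * s) / nr := by
  have h : a * (s / nr) / nr = (a * s) / nr ^ 2 := by ring
  rw [h, Real.sqrt_div hs, Real.sqrt_sq hn.le]

private lemma pointA {α s m nr : ℝ} (hn : 0 < nr) (hα : 0 < α) (hs0 : 0 ≤ s)
    (hsα : s < α) (hm0 : 0 ≤ m) (hmα : m < α / 6) :
    |s / nr - m / nr| < α / nr + Real.sqrt (α * (s / nr) / nr) ∧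
    α / nr + Real.sqrt (α * (s / nr) / nr) < 3 * (α / nr + Real.sqrt (α * (m / nr) / nr)) := by
  have hsq := Real.sqrt_nonneg (α * (s / nr) / nr)
  have hsq2 := Real.sqrt_nonneg (α * (m / nr) / nr)
  constructor
  · have h1 : |s / nr - m / nr| < α / nr := by
      rw [abs_sub_lt_iff, div_sub_div_same, div_sub_div_same]
      constructor <;> [skip; skip] <;> gcongr <;> linarith
    linarith
  · have h2 : Real.sqrt (α * (s / nr) / nr) ≤ α / nr := by
      rw [sqrt_div_nn (by positivity) hn]
      have h := Real.sqrt_le_sqrt (show α * s ≤ α ^ 2 by nlinarith)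
      rw [Real.sqrt_sq hα.le] at h
      have : Real.sqrt (α * s) ≤ α := h
      gcongr
    have hαn : 0 < α / nr := by positivity
    linarith

private lemma pointB {α s m nr δ : ℝ} (hn : 0 < nr) (hα : 0 < α) (hs0 : 0 ≤ s)
    (hm6 : α / 6 ≤ m) (hδ0 : 0 < δ) (hδ1 : δ ≤ 3 / 5) (hδm : δ ^ 2 * m ≤ α / 4)
    (hlow : m - δ * m < s) (hhigh : s < m + δ * m) :
    |s / nr - m / nr| < α / nr + Real.sqrt (α * (s / nr) / nr) ∧
    α / nr + Real.sqrt (α * (s / nr) / nr) < 3 * (α / nr + Real.sqrt (α * (m / nr) / nr)) := by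
  have hm0 : 0 < m := by linarith
  have hs2 : 2 / 5 * m < s := by nlinarith
  have hαn : 0 < α / nr := by positivity
  have hδm2 : (δ * m) ^ 2 < α * s := by nlinarith
  have hδms : δ * m < Real.sqrt (α * s) := (Real.lt_sqrt (by positivity)).2 hδm2
  constructor
  · rw [sqrt_div_nn (by positivity) hn]
    have h1 : |s / nr - m / nr| < (δ * m) / nr := by
      rw [abs_sub_lt_iff, div_sub_div_same, div_sub_div_same]
      constructor <;> gcongr <;> linarith
    have h2 : (δ * m) / nr < Real.sqrt (α * s) / nr := by gcongr
    linarith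
  · rw [sqrt_div_nn (by positivity) hn, sqrt_div_nn (by positivity) hn]
    have h3 : Real.sqrt (α * s) ≤ 2 * Real.sqrt (α * m) := by
      have he : Real.sqrt ((2:ℝ) ^ 2 * (α * m)) = 2 * Real.sqrt (α * m) := by
        rw [Real.sqrt_mul (by positivity : (0:ℝ) ≤ (2:ℝ) ^ 2),
          Real.sqrt_sq (by norm_num : (0:ℝ) ≤ (2:ℝ))]
      rw [← he]
      apply Real.sqrt_le_sqrt; nlinarith
    have h4 : 0 ≤ Real.sqrt (α * m) / nr := by positivity
    have h5 : Real.sqrt (α * s) / nr ≤ 2 * (Real.sqrt (α * m) / nr) := by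
      rw [show 2 * (Real.sqrt (α * m) / nr) = (2 * Real.sqrt (α * m)) / nr by ring]
      gcongr
    linarith


private lemma exp_quad_bound {x : ℝ} (h : |x| ≤ 1) : Real.exp x ≤ 1 + x + 3 / 4 * x ^ 2 := by
  have hb := Real.exp_bound h (n := 2) (by norm_num)
  have hs : ∑ m ∈ Finset.range 2, x ^ m / (m.factorial : ℝ) = 1 + x := by
    simp [Finset.sum_range_succ]
  rw [hs, abs_le] at hb
  have h2 : |x| ^ 2 = x ^ 2 := sq_abs x
  have hb2 := hb.2
  rw [h2] at hb2
  norm_num at hb2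
  nlinarith [hb2]

private lemma numA {α m : ℝ} (hα : 0 < α) (hm0 : 0 ≤ m) (hmα : m < α / 6) :
    Real.exp (-(2 * α) + m * (Real.exp 2 - 1)) ≤ (2 : ℝ) ^ (-α) := by
  rw [Real.rpow_def_of_pos (by norm_num : (0:ℝ) < 2)]
  apply Real.exp_le_exp.2
  have he2 : Real.exp 2 = Real.exp 1 * Real.exp 1 := by
    rw [← Real.exp_add]; norm_num
  have h1 : Real.exp 1 < 2.7182818286 := Real.exp_one_lt_d9
  have h1' : 0 < Real.exp 1 := Real.exp_pos 1
  have hl : Real.log 2 < 0.6931471808 := Real.log_two_lt_d9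
  have hl' : 0 < Real.log 2 := Real.log_pos (by norm_num)
  have hg : Real.exp 1 > 2.7182818283 := Real.exp_one_gt_d9
  have he2b : Real.exp 2 < 7.3891 := by nlinarith
  have he : (0:ℝ) < Real.exp 2 - 1 := by nlinarith
  have hA : m * (Real.exp 2 - 1) ≤ α / 6 * (Real.exp 2 - 1) :=
    mul_le_mul_of_nonneg_right hmα.le he.le
  have hB : α / 6 * (Real.exp 2 - 1) ≤ α / 6 * 6.3891 := by nlinarith
  have hC : Real.log 2 * α < 0.6931471808 * α := mul_lt_mul_of_pos_right hl hα
  nlinarith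

private lemma numB_up {α m δ : ℝ} (hδ0 : 0 < δ) (hδ1 : δ ≤ 3 / 5) (hm0 : 0 ≤ m)
    (hquad : α / 72 ≤ m * δ ^ 2 / 4) :
    Real.exp (-(δ / 2 * (m + δ * m)) + m * (Real.exp (δ / 2) - 1)) ≤ Real.exp (-α / 72) := by
  apply Real.exp_le_exp.2
  have hq : Real.exp (δ / 2) ≤ 1 + δ / 2 + 3 / 4 * (δ / 2) ^ 2 :=
    exp_quad_bound (by rw [abs_of_pos (by linarith)]; linarith)
  have h1 : m * (Real.exp (δ / 2) - 1) ≤ m * (δ / 2 + 3 / 4 * (δ / 2) ^ 2) :=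
    mul_le_mul_of_nonneg_left (by linarith) hm0
  nlinarith [mul_nonneg hm0 (sq_nonneg δ)]

private lemma numB_low {α m δ : ℝ} (hδ0 : 0 < δ) (hδ1 : δ ≤ 3 / 5) (hm0 : 0 ≤ m)
    (hquad : α / 72 ≤ m * δ ^ 2 / 4) :
    Real.exp (δ / 2 * (m - δ * m) + m * (Real.exp (-(δ / 2)) - 1)) ≤ Real.exp (-α / 72) := by
  apply Real.exp_le_exp.2
  have hq : Real.exp (-(δ / 2)) ≤ 1 + -(δ / 2) + 3 / 4 * (-(δ / 2)) ^ 2 :=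
    exp_quad_bound (by rw [abs_neg, abs_of_pos (by linarith)]; linarith)
  have h1 : m * (Real.exp (-(δ / 2)) - 1) ≤ m * (-(δ / 2) + 3 / 4 * (δ / 2) ^ 2) :=
    mul_le_mul_of_nonneg_left (by nlinarith) hm0
  nlinarith [mul_nonneg hm0 (sq_nonneg δ)]


/-- Improved confidence-radius concentration bound: for i.i.d. `[0,1]`-valued random
variables with average `Z` and mean `ζ`, with probability at least
`1 − (2^{−α} + 2 e^{−α/72})` we have `|Z − ζ| < r(α, Z) < 3 r(α, ζ)`, where
`r(α, x) = α/n + sqrt(α x / n)`. -/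
theorem improved_confidence_radius {Ω : Type*} [MeasurableSpace Ω]
    (P : Measure Ω) [IsProbabilityMeasure P] {n : ℕ} (hn : 0 < n)
    (Z : Fin n → Ω → ℝ)
    (hmeas : ∀ i, Measurable (Z i))
    (hindep : iIndepFun Z P)
    (hident : ∀ i j, Measure.map (Z i) P = Measure.map (Z j) P)
    (hrange : ∀ i, ∀ᵐ ω ∂P, Z i ω ∈ Set.Icc (0:ℝ) 1)
    (α : ℝ) (hα : 0 < α) :
    ENNReal.ofReal (1 - ((2:ℝ) ^ (-α) + 2 * Real.exp (-α / 72))) ≤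
      P {ω | |(∑ i, Z i ω) / n - ∫ ω', (∑ i, Z i ω') / n ∂P| <
               α / n + Real.sqrt (α * ((∑ i, Z i ω) / n) / n) ∧
             α / n + Real.sqrt (α * ((∑ i, Z i ω) / n) / n) <
               3 * (α / n + Real.sqrt (α * (∫ ω', (∑ i, Z i ω') / n ∂P) / n))} := by
  have hn' : (0:ℝ) < n := by exact_mod_cast hn
  have hint : ∀ i, Integrable (Z i) P := fun i => by
    refine (integrable_const 1).mono' (hmeas i).aestronglyMeasurable ?_
    filter_upwards [hrange i] with ω h
    rw [Real.norm_eq_abs, abs_le]; exact ⟨by linarith [h.1], h.2⟩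
  have hI : (∫ ω', (∑ i, Z i ω') / n ∂P) = (∑ i, ∫ ω, Z i ω ∂P) / n := by
    rw [integral_div, integral_finset_sum Finset.univ (fun i _ => hint i)]
  rw [hI]
  set m : ℝ := ∑ i, ∫ ω, Z i ω ∂P with hmdef
  have hm0 : 0 ≤ m := Finset.sum_nonneg fun i _ =>
    integral_nonneg_of_ae ((hrange i).mono fun ω h => h.1)
  set q : ℝ := (2:ℝ) ^ (-α) + 2 * Real.exp (-α / 72) with hqdef
  have hq0 : 0 ≤ q := by positivity
  have hf : Measurable fun ω => ∑ i, Z i ω :=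
    Finset.measurable_sum Finset.univ (fun i _ => hmeas i)
  have hg : Measurable fun ω => α / n + Real.sqrt (α * ((∑ i, Z i ω) / n) / n) :=
    measurable_const.add (Real.continuous_sqrt.measurable.comp
      (((hf.div_const _).const_mul α).div_const _))
  have hT : MeasurableSet {ω | |(∑ i, Z i ω) / n - m / n| <
      α / n + Real.sqrt (α * ((∑ i, Z i ω) / n) / n) ∧
      α / n + Real.sqrt (α * ((∑ i, Z i ω) / n) / n) <
      3 * (α / n + Real.sqrt (α * (m / n) / n))} := by
    rw [Set.setOf_and]
    exact (measurableSet_lt (((hf.div_const _).sub_const _).abs) hg).inter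
      (measurableSet_lt hg measurable_const)
  have step : ∀ (T : Set Ω), MeasurableSet T →
      P Tᶜ ≤ ENNReal.ofReal q → ENNReal.ofReal (1 - q) ≤ P T := by
    intro T hTm hle
    have h1 : P T = 1 - P Tᶜ := by
      rw [prob_compl_eq_one_sub hTm, ENNReal.sub_sub_cancel ENNReal.one_ne_top prob_le_one]
    rw [h1, ENNReal.ofReal_sub _ hq0, ENNReal.ofReal_one]
    exact tsub_le_tsub_left hle 1
  refine step _ hT ?_
  by_cases hc : m < α / 6
  · -- small mean case
    have hsub : ({ω | |(∑ i, Z i ω) / n - m / n| <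
        α / n + Real.sqrt (α * ((∑ i, Z i ω) / n) / n) ∧
        α / n + Real.sqrt (α * ((∑ i, Z i ω) / n) / n) <
        3 * (α / n + Real.sqrt (α * (m / n) / n))}ᶜ : Set Ω) ≤ᶠ[ae P]
        {ω | α ≤ ∑ i, Z i ω} := by
      filter_upwards [ae_all_iff.2 hrange] with ω hω hTc
      by_contra hcon
      have hcon' : ∑ i, Z i ω < α := not_le.1 hcon
      exact hTc (pointA hn' hα (Finset.sum_nonneg fun i _ => (hω i).1) hcon' hm0 hc)
    calc P _ ≤ P {ω | α ≤ ∑ i, Z i ω} := measure_mono_ae hsub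
      _ ≤ ENNReal.ofReal (Real.exp (-(2 * α) + m * (Real.exp 2 - 1))) :=
          tail_upper' hmeas hindep hrange α 2 (by norm_num)
      _ ≤ ENNReal.ofReal ((2:ℝ) ^ (-α)) := ENNReal.ofReal_le_ofReal (numA hα hm0 hc)
      _ ≤ ENNReal.ofReal q := ENNReal.ofReal_le_ofReal
          (by rw [hqdef]; linarith [Real.exp_pos (-α / 72)])
  · -- large mean case
    push_neg at hc
    have hm0' : 0 < m := lt_of_lt_of_le (by positivity) hc
    set δ : ℝ := min (3/5 : ℝ) (Real.sqrt (α / (4 * m))) with hδdef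
    have hδ0 : 0 < δ := lt_min (by norm_num) (Real.sqrt_pos.2 (by positivity))
    have hδ1 : δ ≤ 3/5 := min_le_left _ _
    have hδsq : δ ^ 2 ≤ α / (4 * m) := by
      have h := min_le_right (3/5 : ℝ) (Real.sqrt (α / (4 * m)))
      have h2 : δ ^ 2 ≤ (Real.sqrt (α / (4 * m))) ^ 2 := by nlinarith [Real.sqrt_nonneg (α / (4 * m))]
      rwa [Real.sq_sqrt (by positivity : (0:ℝ) ≤ α / (4 * m))] at h2
    have hδm : δ ^ 2 * m ≤ α / 4 := by
      calc δ ^ 2 * m ≤ (α / (4 * m)) * m := mul_le_mul_of_nonneg_right hδsq hm0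
        _ = α / 4 := by field_simp
    have hquad : α / 72 ≤ m * δ ^ 2 / 4 := by
      rcases min_cases (3/5 : ℝ) (Real.sqrt (α / (4 * m))) with ⟨h1, h2⟩ | ⟨h1, h2⟩
      · rw [hδdef, h1]; nlinarith
      · have hsq : δ ^ 2 = α / (4 * m) := by
          rw [hδdef, h1, Real.sq_sqrt (by positivity : (0:ℝ) ≤ α / (4 * m))]
        rw [hsq]
        rw [show m * (α / (4 * m)) / 4 = α / 16 by field_simp; ring]
        linarith
    have hsub : ({ω | |(∑ i, Z i ω) / n - m / n| <
        α / n + Real.sqrt (α * ((∑ i, Z i ω) / n) / n) ∧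
        α / n + Real.sqrt (α * ((∑ i, Z i ω) / n) / n) <
        3 * (α / n + Real.sqrt (α * (m / n) / n))}ᶜ : Set Ω) ≤ᶠ[ae P]
        (({ω | m + δ * m ≤ ∑ i, Z i ω} ∪ {ω | ∑ i, Z i ω ≤ m - δ * m} : Set Ω)) := by
      filter_upwards [ae_all_iff.2 hrange] with ω hω hTc
      by_contra hcon
      have h1 : ∑ i, Z i ω < m + δ * m := not_le.1 (fun h => hcon (Or.inl h))
      have h2 : m - δ * m < ∑ i, Z i ω := not_le.1 (fun h => hcon (Or.inr h))
      exact hTc (pointB hn' hα (Finset.sum_nonneg fun i _ => (hω i).1) hc hδ0 hδ1 hδm h2 h1)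
    have hup : P {ω | m + δ * m ≤ ∑ i, Z i ω} ≤ ENNReal.ofReal (Real.exp (-α / 72)) :=
      (tail_upper' hmeas hindep hrange (m + δ * m) (δ / 2) (by linarith)).trans
        (ENNReal.ofReal_le_ofReal (numB_up hδ0 hδ1 hm0 hquad))
    have hlow : P {ω | ∑ i, Z i ω ≤ m - δ * m} ≤ ENNReal.ofReal (Real.exp (-α / 72)) :=
      (tail_lower' hmeas hindep hrange (m - δ * m) (δ / 2) (by linarith)).trans
        (ENNReal.ofReal_le_ofReal (numB_low hδ0 hδ1 hm0 hquad))
    calc P _ ≤ P ({ω | m + δ * m ≤ ∑ i, Z i ω} ∪ {ω | ∑ i, Z i ω ≤ m - δ * m}) :=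
          measure_mono_ae hsub
      _ ≤ P {ω | m + δ * m ≤ ∑ i, Z i ω} + P {ω | ∑ i, Z i ω ≤ m - δ * m} :=
          measure_union_le _ _
      _ ≤ ENNReal.ofReal (Real.exp (-α / 72)) + ENNReal.ofReal (Real.exp (-α / 72)) :=
          add_le_add hup hlow
      _ = ENNReal.ofReal (2 * Real.exp (-α / 72)) := by
          rw [← ENNReal.ofReal_add (Real.exp_pos _).le (Real.exp_pos _).le]; ring_nf
      _ ≤ ENNReal.ofReal q := ENNReal.ofReal_le_ofReal
          (by rw [hqdef]
              nlinarith [Real.rpow_pos_of_pos (show (0:ℝ) < 2 by norm_num) (-α)])
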